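/- Let K be a field with a complete nontrivial non-Archimedean absolute value and let G be a set. For every a ∈ c₀(G,K): (i) for each x ∈ c₀(G,K) the family (x(s)a(s))_{s∈G} is summable in K and |∑_{s∈G} x(s)a(s)| ≤ ‖x‖·‖a‖; (ii) the norm reproducing property holds: ‖a‖ = sup over nonzero x ∈ c₀(G,K) of |∑_{s∈G} x(s)a(s)| / ‖x‖. -/

import Mathlib

open ZeroAtInfty Filter Topology

section aux

variable {K G : Type*} [NontriviallyNormedField K] [CompleteSpace K]
    [IsUltrametricDist K] [TopologicalSpace G] [DiscreteTopology G]

lemma c0_apply_norm_le (a : C₀(G, K)) (s : G) : ‖a s‖ ≤ ‖a‖ := by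
  rw [← ZeroAtInftyContinuousMap.norm_toBCF_eq_norm]
  exact a.toBCF.norm_coe_le_norm s

lemma c0_norm_le (a : C₀(G, K)) {C : ℝ} (hC : 0 ≤ C) (h : ∀ s, ‖a s‖ ≤ C) : ‖a‖ ≤ C := by
  rw [← ZeroAtInftyContinuousMap.norm_toBCF_eq_norm]
  exact (BoundedContinuousFunction.norm_le hC).2 h

lemma c0_tendsto_cofinite (a : C₀(G, K)) : Tendsto a cofinite (𝓝 0) := by
  have := zero_at_infty a
  rwa [cocompact_eq_cofinite] at this

/-- the norm of a nonzero element of `c₀` is attained -/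
lemma c0_exists_norm_eq (a : C₀(G, K)) (ha : a ≠ 0) : ∃ s : G, ‖a s‖ = ‖a‖ := by
  have hapos : 0 < ‖a‖ := by
    rw [norm_pos_iff]; exact ha
  have hev : ∀ᶠ s in cofinite, ‖a s‖ < ‖a‖ / 2 := by
    have h := Metric.tendsto_nhds.mp (c0_tendsto_cofinite a) (‖a‖ / 2) (by linarith)
    simpa [dist_zero_right] using h
  have hfin : {s : G | ‖a‖ / 2 ≤ ‖a s‖}.Finite := by
    have := hev
    rw [Filter.eventually_cofinite] at this
    exact this.subset (fun s hs => by simpa using not_lt.mpr hs)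
  have hne : {s : G | ‖a‖ / 2 ≤ ‖a s‖}.Nonempty := by
    by_contra hcon
    have hall : ∀ s, ‖a s‖ ≤ ‖a‖ / 2 :=
      fun s => le_of_lt (not_le.mp fun h => hcon ⟨s, h⟩)
    linarith [c0_norm_le a (by linarith) hall]
  obtain ⟨s₀, hs₀mem, hs₀max⟩ := hfin.toFinset.exists_max_image (fun s => ‖a s‖)
    (by rwa [Set.Finite.toFinset_nonempty])
  rw [Set.Finite.mem_toFinset] at hs₀mem
  refine ⟨s₀, le_antisymm (c0_apply_norm_le a s₀) ?_⟩
  refine c0_norm_le a (norm_nonneg _) fun s => ?_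
  by_cases hs : ‖a‖ / 2 ≤ ‖a s‖
  · exact hs₀max s (by rwa [Set.Finite.mem_toFinset])
  · push_neg at hs
    exact hs.le.trans hs₀mem

/-- the "single" function in `c₀` -/
noncomputable def c0Single [DecidableEq G] (s₀ : G) : C₀(G, K) where
  toFun := Pi.single s₀ 1
  continuous_toFun := continuous_of_discreteTopology
  zero_at_infty' := by
    rw [cocompact_eq_cofinite]
    refine tendsto_const_nhds.congr' ?_
    filter_upwards [Set.Finite.eventually_cofinite_notMem (Set.finite_singleton s₀)] with s hs
    simp only [Set.mem_singleton_iff] at hs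
    simp [Pi.single_eq_of_ne hs]

lemma c0Single_apply_self [DecidableEq G] (s₀ : G) : (c0Single s₀ : C₀(G, K)) s₀ = 1 := by
  simp [c0Single]

lemma c0Single_apply_ne [DecidableEq G] (s₀ : G) {s : G} (hs : s ≠ s₀) : (c0Single s₀ : C₀(G, K)) s = 0 := by
  simp [c0Single, Pi.single_eq_of_ne hs]

lemma c0Single_norm [DecidableEq G] (s₀ : G) : ‖(c0Single s₀ : C₀(G, K))‖ = 1 := by
  refine le_antisymm (c0_norm_le _ zero_le_one fun s => ?_) ?_
  · by_cases hs : s = s₀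
    · subst hs; simp [c0Single_apply_self]
    · simp [c0Single_apply_ne s₀ hs]
  · calc (1 : ℝ) = ‖(c0Single s₀ : C₀(G, K)) s₀‖ := by simp [c0Single_apply_self]
    _ ≤ _ := c0_apply_norm_le _ s₀

end aux

/-- Let `K` be a field with a complete nontrivial non-Archimedean absolute
value and `G` a (discrete) set.  For every `a ∈ c₀(G, K)`:
(i) for each `x ∈ c₀(G, K)` the family `(x s * a s)` is summable and
`‖∑ x s * a s‖ ≤ ‖x‖ * ‖a‖`;
(ii) the norm reproducing property holds:
`‖a‖ = sup_{x ≠ 0} ‖∑ x s * a s‖ / ‖x‖`. -/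
theorem c0_norm_reproducing {K G : Type*} [NontriviallyNormedField K] [CompleteSpace K]
    [IsUltrametricDist K] [TopologicalSpace G] [DiscreteTopology G] (a : C₀(G, K)) :
    (∀ x : C₀(G, K), Summable (fun s : G => x s * a s) ∧
      ‖∑' s : G, x s * a s‖ ≤ ‖x‖ * ‖a‖) ∧
    ‖a‖ = ⨆ x : {x : C₀(G, K) // x ≠ 0}, ‖∑' s : G, (x : C₀(G, K)) s * a s‖ / ‖(x : C₀(G, K))‖ := by
  classical
  have key : ∀ x : C₀(G, K), Summable (fun s : G => x s * a s) ∧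
      ‖∑' s : G, x s * a s‖ ≤ ‖x‖ * ‖a‖ := by
    intro x
    constructor
    · apply NonarchimedeanAddGroup.summable_of_tendsto_cofinite_zero
      have hb : ∀ s : G, ‖x s * a s‖ ≤ ‖x‖ * ‖a s‖ := fun s => by
        rw [norm_mul]
        exact mul_le_mul_of_nonneg_right (c0_apply_norm_le x s) (norm_nonneg _)
      have : Tendsto (fun s : G => ‖x‖ * ‖a s‖) cofinite (𝓝 0) := by
        simpa using ((c0_tendsto_cofinite a).norm.const_mul ‖x‖)
      exact tendsto_zero_iff_norm_tendsto_zero.mpr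
        (squeeze_zero (fun s => norm_nonneg _) hb this)
    · refine IsUltrametricDist.norm_tsum_le_of_forall_le_of_nonneg
        (mul_nonneg (norm_nonneg _) (norm_nonneg _)) fun s => ?_
      rw [norm_mul]
      exact mul_le_mul (c0_apply_norm_le x s) (c0_apply_norm_le a s) (norm_nonneg _)
        (norm_nonneg _)
  refine ⟨key, ?_⟩
  have hbdd : ∀ x : {x : C₀(G, K) // x ≠ 0},
      ‖∑' s : G, (x : C₀(G, K)) s * a s‖ / ‖(x : C₀(G, K))‖ ≤ ‖a‖ := by
    rintro ⟨x, hx⟩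
    have hxpos : 0 < ‖x‖ := by rwa [norm_pos_iff]
    rw [div_le_iff₀ hxpos]
    calc ‖∑' s : G, x s * a s‖ ≤ ‖x‖ * ‖a‖ := (key x).2
      _ = ‖a‖ * ‖x‖ := mul_comm _ _
  refine le_antisymm ?_ (Real.iSup_le hbdd (norm_nonneg _))
  by_cases ha : a = 0
  · subst ha
    simp only [norm_zero]
    exact Real.iSup_nonneg fun x => div_nonneg (norm_nonneg _) (norm_nonneg _)
  · obtain ⟨s₀, hs₀⟩ := c0_exists_norm_eq a ha
    have hx0 : (c0Single s₀ : C₀(G, K)) ≠ 0 := by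
      intro h
      have := c0Single_apply_self (K := K) s₀
      rw [h] at this
      simp at this
    refine le_ciSup_of_le ⟨‖a‖, Set.forall_mem_range.mpr hbdd⟩ ⟨c0Single s₀, hx0⟩ ?_
    have htsum : ∑' s : G, (c0Single s₀ : C₀(G, K)) s * a s = a s₀ := by
      rw [tsum_eq_single s₀ (fun b hb => by rw [c0Single_apply_ne s₀ hb, zero_mul])]
      rw [c0Single_apply_self, one_mul]
    simp only [htsum, c0Single_norm, div_one]
    exact hs₀.ge
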